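/- Corollary to the arithmetic-progression structure: if A is the set of parameterized-match positions of P in a window of T forming an arithmetic progression with common difference rho (the p-period of P), then the string pred(T)[(i + m - rho)..(i + m - 1)] is the same for every i in A. -/

import Mathlib

/-- Predecessor value: smallest positive `d ≤ j` with `S (j-d) = S j`, or 0 if none. -/
noncomputable def predVal {α : Type*} (S : ℕ → α) (j : ℕ) : ℕ :=
  sInf {d : ℕ | 0 < d ∧ d ≤ j ∧ S (j - d) = S j}

/-- Parameterized match between the length-`n` strings `S` and `S'`. -/
def PMatch {α : Type*} (n : ℕ) (S S' : ℕ → α) : Prop :=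
  ∃ f : α → α, Function.Injective f ∧ ∀ j < n, S' j = f (S j)

/-- `ρ` is a p-period of the length-`m` string `P`. -/
def IsPPeriod {α : Type*} (m : ℕ) (P : ℕ → α) (ρ : ℕ) : Prop :=
  0 < ρ ∧ ρ < m ∧ PMatch (m - ρ) P (fun k => P (ρ + k))

/-- `ρ` is the p-period (the smallest one) of the length-`m` string `P`. -/
def IsMinPPeriod {α : Type*} (m : ℕ) (P : ℕ → α) (ρ : ℕ) : Prop :=
  IsPPeriod m P ρ ∧ ∀ ρ', IsPPeriod m P ρ' → ρ ≤ ρ'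

/-- The p-period of the length-`n` string `P`. -/
noncomputable def pPeriod {α : Type*} (n : ℕ) (P : ℕ → α) : ℕ :=
  sInf {ρ | IsPPeriod n P ρ}

/-- `a` is the smallest index such that every symbol of the length-`m` string `P`
occurs in `P[0..a]`. -/
def MinAlphaIndex {α : Type*} (m : ℕ) (P : ℕ → α) (a : ℕ) : Prop :=
  (∀ j < m, ∃ i ≤ a, P i = P j) ∧ ∀ a' < a, ¬ (∀ j < m, ∃ i ≤ a', P i = P j)

/-! ### Auxiliary lemmas about `predVal` -/

lemma predVal_spec_of_pos {α : Type*} {S : ℕ → α} {j : ℕ} (h : 0 < predVal S j) :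
    predVal S j ≤ j ∧ S (j - predVal S j) = S j := by
  have hne : {d : ℕ | 0 < d ∧ d ≤ j ∧ S (j - d) = S j}.Nonempty := by
    by_contra hc
    rw [Set.not_nonempty_iff_eq_empty] at hc
    rw [predVal, hc, Nat.sInf_empty] at h
    exact absurd h (lt_irrefl 0)
  have hmem := Nat.sInf_mem hne
  exact ⟨hmem.2.1, hmem.2.2⟩

lemma predVal_le' {α : Type*} {S : ℕ → α} {j d : ℕ} (h1 : 0 < d) (h2 : d ≤ j)
    (h3 : S (j - d) = S j) : predVal S j ≤ d :=
  Nat.sInf_le ⟨h1, h2, h3⟩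

lemma predVal_pos {α : Type*} {S : ℕ → α} {j d : ℕ} (h1 : 0 < d) (h2 : d ≤ j)
    (h3 : S (j - d) = S j) : 0 < predVal S j := by
  have hmem := Nat.sInf_mem (⟨d, h1, h2, h3⟩ :
    {d : ℕ | 0 < d ∧ d ≤ j ∧ S (j - d) = S j}.Nonempty)
  exact hmem.1

lemma predVal_eq_zero_iff {α : Type*} {S : ℕ → α} {j : ℕ} :
    predVal S j = 0 ↔ ∀ d, 0 < d → d ≤ j → S (j - d) ≠ S j := by
  constructor
  · intro h d h1 h2 h3
    have := predVal_pos h1 h2 h3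
    omega
  · intro h
    apply Nat.sInf_eq_zero.mpr
    right
    ext d
    simp only [Set.mem_setOf_eq, Set.mem_empty_iff_false, iff_false]
    rintro ⟨a, b, cc⟩
    exact h d a b cc

/-- If `P` p-matches the window of `T` at position `i` and offset `j < m` has a positive
predecessor inside `P`, then `predVal T (i+j)` equals `predVal P j`. -/
lemma predVal_match {α : Type*} {m i j : ℕ} {P T : ℕ → α}
    (hm : PMatch m P (fun k => T (i + k))) (hj : j < m) (hq : 0 < predVal P j) :
    predVal T (i + j) = predVal P j := by
  obtain ⟨f, hfi, hf⟩ := hm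
  have hf' : ∀ k, k < m → T (i + k) = f (P k) := hf
  obtain ⟨hqj, hqe⟩ := predVal_spec_of_pos hq
  have hTq : T (i + j - predVal P j) = T (i + j) := by
    have h1 : i + j - predVal P j = i + (j - predVal P j) := by omega
    rw [h1, hf' _ (by omega), hf' _ hj, hqe]
  have hle : predVal T (i + j) ≤ predVal P j := predVal_le' hq (by omega) hTq
  have hpos : 0 < predVal T (i + j) := predVal_pos hq (by omega) hTq
  obtain ⟨hpj, hpe⟩ := predVal_spec_of_pos hpos
  have hge : predVal P j ≤ predVal T (i + j) := by
    have h2 : i + j - predVal T (i + j) = i + (j - predVal T (i + j)) := by omega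
    rw [h2, hf' _ (by omega), hf' _ hj] at hpe
    exact predVal_le' hpos (by omega) (hfi hpe)
  omega

/-- First occurrences propagate downwards by the p-period. -/
lemma predVal_zero_step {α : Type*} {m ρ x : ℕ} {P : ℕ → α}
    (hπ : PMatch (m - ρ) P (fun k => P (ρ + k)))
    (h0 : predVal P x = 0) (hρx : ρ ≤ x) (hxm : x < m) : predVal P (x - ρ) = 0 := by
  obtain ⟨π, hπi, hπs⟩ := hπ
  have hπ' : ∀ k, k < m - ρ → P (ρ + k) = π (P k) := hπs
  rw [predVal_eq_zero_iff] at h0 ⊢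
  intro d hd hdx he
  have e1 : P (ρ + (x - ρ - d)) = π (P (x - ρ - d)) := hπ' _ (by omega)
  have e2 : P (ρ + (x - ρ)) = π (P (x - ρ)) := hπ' _ (by omega)
  have e3 : ρ + (x - ρ - d) = x - d := by omega
  have e4 : ρ + (x - ρ) = x := by omega
  apply h0 d hd (by omega)
  rw [← e3, e1, he, ← e2, e4]

/-- Any first-occurrence position of a p-periodic string is below `|σ| * ρ`. -/
lemma firstocc_lt {σ : Type*} [Fintype σ] {m ρ x : ℕ} {P : ℕ → σ} (hρ0 : 0 < ρ)
    (hπ : PMatch (m - ρ) P (fun k => P (ρ + k))) (hxm : x < m) (h0 : predVal P x = 0) :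
    x < Fintype.card σ * ρ := by
  have hchain : ∀ a : ℕ, a * ρ ≤ x → predVal P (x - a * ρ) = 0 := by
    intro a
    induction a with
    | zero => intro _; simpa using h0
    | succ a ih =>
      intro h
      have e : (a + 1) * ρ = a * ρ + ρ := by ring
      rw [e] at h ⊢
      have h1 : a * ρ ≤ x := by omega
      have h2 := ih h1
      have h3 : x - (a * ρ + ρ) = (x - a * ρ) - ρ := by omega
      rw [h3]
      exact predVal_zero_step hπ h2 (by omega) (by omega)
  have H : ∀ a b : Fin (x / ρ + 1), (a : ℕ) < b → P (x - (a : ℕ) * ρ) ≠ P (x - (b : ℕ) * ρ) := by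
    intro a b hab hPeq
    have hble : (b : ℕ) ≤ x / ρ := by omega
    have hbx : (b : ℕ) * ρ ≤ x :=
      le_trans (Nat.mul_le_mul_right ρ hble) (Nat.div_mul_le_self x ρ)
    have haltb : (a : ℕ) * ρ < (b : ℕ) * ρ := (Nat.mul_lt_mul_right hρ0).mpr hab
    have hax : (a : ℕ) * ρ ≤ x := by omega
    have h2 := hchain a hax
    rw [predVal_eq_zero_iff] at h2
    refine h2 ((x - (a : ℕ) * ρ) - (x - (b : ℕ) * ρ)) (by omega) (by omega) ?_
    have he : (x - (a : ℕ) * ρ) - ((x - (a : ℕ) * ρ) - (x - (b : ℕ) * ρ)) = x - (b : ℕ) * ρ := by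
      omega
    rw [he]
    exact hPeq.symm
  have hinj : Function.Injective (fun a : Fin (x / ρ + 1) => P (x - (a : ℕ) * ρ)) := by
    intro a b hab
    by_contra hne
    rcases lt_trichotomy ((a : ℕ)) ((b : ℕ)) with h | h | h
    · exact H a b h hab
    · exact hne (Fin.ext h)
    · exact H b a h hab.symm
  have hcard := Fintype.card_le_of_injective _ hinj
  rw [Fintype.card_fin] at hcard
  have hdiv : x / ρ < Fintype.card σ := by omega
  exact (Nat.div_lt_iff_lt_mul hρ0).mp hdiv

/-- The gap between two p-match positions is a p-period. -/
lemma match_gap_pperiod {σ : Type*} [Fintype σ] {m i i' : ℕ} {P T : ℕ → σ}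
    (hii : i < i') (him : i' - i < m)
    (h1 : PMatch m P (fun k => T (i + k))) (h2 : PMatch m P (fun k => T (i' + k))) :
    IsPPeriod m P (i' - i) := by
  have hσ : Nonempty σ := ⟨P 0⟩
  obtain ⟨f, hfi, hf⟩ := h1
  obtain ⟨g, hgi, hg⟩ := h2
  have hf' : ∀ k, k < m → T (i + k) = f (P k) := hf
  have hg' : ∀ k, k < m → T (i' + k) = g (P k) := hg
  have hfb : Function.Bijective f := Finite.injective_iff_bijective.mp hfi
  refine ⟨by omega, him, fun x => (Equiv.ofBijective f hfb).symm (g x),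
    ((Equiv.ofBijective f hfb).symm.injective).comp hgi, ?_⟩
  intro j hj
  show P (i' - i + j) = (Equiv.ofBijective f hfb).symm (g (P j))
  have e1 : T (i + (i' - i + j)) = f (P (i' - i + j)) := hf' _ (by omega)
  have e2 : T (i' + j) = g (P j) := hg' _ (by omega)
  have e3 : i + (i' - i + j) = i' + j := by omega
  rw [e3, e2] at e1
  rw [e1]
  exact ((Equiv.ofBijective f hfb).symm_apply_apply (P (i' - i + j))).symm

/-- Key extension lemma: two p-matches whose distance exceeds the minimal p-period `ρ`
(but is not too large) force a p-match at the shift by `ρ`. -/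
lemma match_extend {σ : Type*} [Fintype σ] {m ρ i i' : ℕ} {P T : ℕ → σ} (hρ0 : 0 < ρ)
    (hii : i + ρ < i')
    (hdm : (i' - i) + (Fintype.card σ + 1) * ρ ≤ m)
    (hπ : PMatch (m - ρ) P (fun k => P (ρ + k)))
    (h1 : PMatch m P (fun k => T (i + k))) (h2 : PMatch m P (fun k => T (i' + k))) :
    PMatch m P (fun k => T (i + ρ + k)) := by
  have hσ : Nonempty σ := ⟨P 0⟩
  obtain ⟨f, hfi, hf⟩ := h1
  obtain ⟨g, hgi, hg⟩ := h2
  obtain ⟨π, hπi, hπs⟩ := hπ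
  have hf' : ∀ k, k < m → T (i + k) = f (P k) := hf
  have hg' : ∀ k, k < m → T (i' + k) = g (P k) := hg
  have hπ' : ∀ k, k < m - ρ → P (ρ + k) = π (P k) := hπs
  have hfb : Function.Bijective f := Finite.injective_iff_bijective.mp hfi
  set d := i' - i with hd
  have hdm' : d + (Fintype.card σ * ρ + ρ) ≤ m := by
    have e : (Fintype.card σ + 1) * ρ = Fintype.card σ * ρ + ρ := by ring
    rw [hd]; rw [e] at hdm; exact hdm
  have hτs : ∀ j, j < m - d → P (d + j) = (Equiv.ofBijective f hfb).symm (g (P j)) := by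
    intro j hjm
    have e1 : T (i + (d + j)) = f (P (d + j)) := hf' _ (by omega)
    have e2 : T (i' + j) = g (P j) := hg' _ (by omega)
    have e3 : i + (d + j) = i' + j := by omega
    rw [e3, e2] at e1
    rw [e1]
    exact ((Equiv.ofBijective f hfb).symm_apply_apply (P (d + j))).symm
  have hgf : ∀ x, g x = f ((Equiv.ofBijective f hfb).symm (g x)) := fun x =>
    ((Equiv.ofBijective f hfb).apply_symm_apply (g x)).symm
  refine ⟨f ∘ π, hfi.comp hπi, ?_⟩
  intro k hk
  show T (i + ρ + k) = f (π (P k))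
  by_cases hkρ : k < m - ρ
  · have e1 : T (i + (ρ + k)) = f (P (ρ + k)) := hf' _ (by omega)
    have e2 : i + (ρ + k) = i + ρ + k := by omega
    rw [e2] at e1
    rw [e1, hπ' k hkρ]
  · -- here m - ρ ≤ k < m
    have hkd : d ≤ k := by
      generalize Fintype.card σ * ρ = E at hdm'
      omega
    set j := k - d with hj
    have hjm : j < m - d := by omega
    have hjρ : j < m - ρ := by omega
    have e1 : T (i' + (ρ + j)) = g (P (ρ + j)) := hg' _ (by omega)
    have e2 : i' + (ρ + j) = i + ρ + k := by omega
    rw [e2] at e1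
    rw [e1]
    rw [hπ' j hjρ]
    have ePk : P k = (Equiv.ofBijective f hfb).symm (g (P j)) := by
      have h := hτs j hjm
      rw [show d + j = k by omega] at h
      exact h
    rw [ePk, hgf (π (P j))]
    congr 1
    -- commutation of the two permutations on the symbol `P j`
    have hj0ne : ({u : ℕ | P u = P j}).Nonempty := ⟨j, rfl⟩
    set j0 := sInf {u : ℕ | P u = P j} with hj0
    have hj0P : P j0 = P j := Nat.sInf_mem hj0ne
    have hj0le : j0 ≤ j := Nat.sInf_le (by exact rfl)
    have hpred0 : predVal P j0 = 0 := by
      rw [predVal_eq_zero_iff]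
      intro dd h1' h2' h3'
      have hmem : j0 - dd ∈ {u : ℕ | P u = P j} := by
        rw [Set.mem_setOf_eq, h3', hj0P]
      have := Nat.sInf_le hmem
      omega
    have hj0m : j0 < m := by omega
    have hj0c : j0 < Fintype.card σ * ρ := firstocc_lt hρ0 ⟨π, hπi, hπs⟩ hj0m hpred0
    have b1 : j0 < m - ρ := by
      generalize Fintype.card σ * ρ = E at hdm' hj0c
      omega
    have b2 : ρ + j0 < m - d := by
      generalize Fintype.card σ * ρ = E at hdm' hj0c
      omega
    have b3 : j0 < m - d := by
      generalize Fintype.card σ * ρ = E at hdm' hj0c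
      omega
    have b4 : d + j0 < m - ρ := by
      generalize Fintype.card σ * ρ = E at hdm' hj0c
      omega
    calc (Equiv.ofBijective f hfb).symm (g (π (P j)))
        = (Equiv.ofBijective f hfb).symm (g (π (P j0))) := by rw [hj0P]
      _ = (Equiv.ofBijective f hfb).symm (g (P (ρ + j0))) := by rw [hπ' j0 b1]
      _ = P (d + (ρ + j0)) := (hτs _ b2).symm
      _ = P (ρ + (d + j0)) := by rw [show d + (ρ + j0) = ρ + (d + j0) by omega]
      _ = π (P (d + j0)) := hπ' _ b4
      _ = π ((Equiv.ofBijective f hfb).symm (g (P j0))) := by rw [hτs j0 b3]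
      _ = π ((Equiv.ofBijective f hfb).symm (g (P j))) := by rw [hj0P]

/-- Corollary to the arithmetic-progression structure lemma: the partition of the match
positions can be chosen so that, for the arithmetic progression A, the predecessor string
pred(T)[(i+m-ρ)..(i+m-1)] is the same for every i in A. -/
theorem pred_same_on_progression {σ : Type*} [Fintype σ] (m ρ t : ℕ) (P T : ℕ → σ)
    (hρ : IsMinPPeriod m P ρ) :
    ∃ (Y A : Set ℕ) (i0 L : ℕ),
      {i : ℕ | t ≤ i ∧ 2 * (i + m) ≤ 2 * t + 3 * m ∧ PMatch m P (fun k => T (i + k))}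
        = Y ∪ A ∧
      Disjoint Y A ∧
      Y.Finite ∧ Y.ncard ≤ 6 * Fintype.card σ ∧
      (∀ y ∈ Y, ∀ x ∈ A, y < x) ∧
      A = (fun k => i0 + k * ρ) '' (Set.Iio L) ∧
      (∀ i ∈ A, ∀ i' ∈ A, ∀ d < ρ,
        predVal T (i + m - ρ + d) = predVal T (i' + m - ρ + d)) := by
  classical
  obtain ⟨⟨hρ0, hρm, hπ⟩, hmin⟩ := hρ
  have hσ : Nonempty σ := ⟨P 0⟩
  have hc1 : 1 ≤ Fintype.card σ := Fintype.card_pos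
  set M := {i : ℕ | t ≤ i ∧ 2 * (i + m) ≤ 2 * t + 3 * m ∧ PMatch m P (fun k => T (i + k))}
    with hM
  have hMmem : ∀ i, i ∈ M ↔ t ≤ i ∧ 2 * (i + m) ≤ 2 * t + 3 * m ∧
      PMatch m P (fun k => T (i + k)) := fun i => Iff.rfl
  have hMfin : M.Finite := by
    apply (Set.finite_Icc t (2 * t + 3 * m)).subset
    intro i hi
    rw [hMmem] at hi
    rw [Set.mem_Icc]
    omega
  have hgap : ∀ i ∈ M, ∀ i' ∈ M, i < i' → ρ ≤ i' - i := by
    intro i hi i' hi' hlt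
    rw [hMmem] at hi hi'
    refine hmin _ (match_gap_pperiod hlt (by omega) hi.2.2 hi'.2.2)
  by_cases hbig : 6 * Fintype.card σ + 2 ≤ M.ncard
  · -- many matches: the whole match set is an arithmetic progression with difference ρ
    have hne : M.Nonempty := by
      rw [← Set.ncard_pos hMfin]
      omega
    -- counting: M.ncard ≤ m/2/ρ + 1
    have hcount : M.ncard ≤ m / 2 / ρ + 1 := by
      have hmaps : ∀ x ∈ M, (fun x => (x - t) / ρ) x ∈ Set.Iio (m / 2 / ρ + 1) := by
        intro x hx
        rw [hMmem] at hx
        simp only [Set.mem_Iio]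
        have h1 : x - t ≤ m / 2 := by omega
        have h2 := Nat.div_le_div_right (c := ρ) h1
        omega
      have hinj : Set.InjOn (fun x => (x - t) / ρ) M := by
        have Hcore : ∀ x ∈ M, ∀ y ∈ M, x < y → (x - t) / ρ = (y - t) / ρ → False := by
          intro x hx y hy hlt hxy
          have hρle := hgap x hx y hy hlt
          rw [hMmem] at hx hy
          have e1 : (x - t) / ρ * ρ ≤ x - t := Nat.div_mul_le_self _ _
          have e2 := Nat.div_add_mod (y - t) ρ
          have e3 : (y - t) % ρ < ρ := Nat.mod_lt _ hρ0
          rw [hxy] at e1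
          have e4 : ρ * ((y - t) / ρ) = (y - t) / ρ * ρ := by ring
          rw [e4] at e2
          generalize (y - t) / ρ * ρ = X at e1 e2
          omega
        intro x hx y hy hxy
        by_contra hne'
        rcases lt_or_gt_of_ne hne' with h | h
        · exact Hcore x hx y hy h hxy
        · exact Hcore y hy x hx h hxy.symm
      have := Set.ncard_le_ncard_of_injOn _ hmaps hinj (Set.finite_Iio _)
      have hIio : (Set.Iio (m / 2 / ρ + 1)).ncard = m / 2 / ρ + 1 := by
        rw [← Finset.coe_Iio, Set.ncard_coe_finset, Nat.card_Iio]
      omega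
    have hH : (6 * Fintype.card σ + 1) * ρ ≤ m / 2 := by
      have h1 : 6 * Fintype.card σ + 1 ≤ m / 2 / ρ := by omega
      exact (Nat.le_div_iff_mul_le hρ0).mp h1
    have hA : (Fintype.card σ + 1) * ρ ≤ m / 2 :=
      le_trans (Nat.mul_le_mul_right ρ (by omega)) hH
    have hA2 : Fintype.card σ * ρ + ρ ≤ m / 2 := by
      have e : (Fintype.card σ + 1) * ρ = Fintype.card σ * ρ + ρ := by ring
      rw [← e]; exact hA
    have hFne : hMfin.toFinset.Nonempty := by
      rw [Set.Finite.toFinset_nonempty]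
      exact hne
    set i0 := hMfin.toFinset.min' hFne with hi0
    set iN := hMfin.toFinset.max' hFne with hiN
    have hi0M : i0 ∈ M := by
      rw [hi0]
      exact (Set.Finite.mem_toFinset hMfin).mp (Finset.min'_mem _ _)
    have hiNM : iN ∈ M := by
      rw [hiN]
      exact (Set.Finite.mem_toFinset hMfin).mp (Finset.max'_mem _ _)
    have hle_iN : ∀ x ∈ M, x ≤ iN := by
      intro x hx
      rw [hiN]
      exact Finset.le_max' _ x ((Set.Finite.mem_toFinset hMfin).mpr hx)
    have hi0_le : ∀ x ∈ M, i0 ≤ x := by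
      intro x hx
      rw [hi0]
      exact Finset.min'_le _ x ((Set.Finite.mem_toFinset hMfin).mpr hx)
    have hi0iN : i0 ≤ iN := hi0_le iN hiNM
    have hstep : ∀ i ∈ M, i + ρ ≤ iN → i + ρ ∈ M := by
      intro i hi hile
      rcases eq_or_lt_of_le hile with heq | hlt
      · rw [heq]; exact hiNM
      · have hiM := hi
        rw [hMmem] at hiM
        have hiNM' := hiNM
        rw [hMmem] at hiNM'
        have hpm : PMatch m P (fun k => T (i + ρ + k)) := by
          refine match_extend hρ0 hlt ?_ hπ hiM.2.2 hiNM'.2.2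
          have h2 : iN - i ≤ m / 2 := by omega
          generalize (Fintype.card σ + 1) * ρ = X at hA ⊢
          omega
        rw [hMmem]
        refine ⟨by omega, by omega, hpm⟩
    have hchain : ∀ a : ℕ, i0 + a * ρ ≤ iN → i0 + a * ρ ∈ M := by
      intro a
      induction a with
      | zero => intro _; simpa using hi0M
      | succ a ih =>
        intro h
        have e : (a + 1) * ρ = a * ρ + ρ := by ring
        rw [e] at h ⊢
        generalize hX : a * ρ = X at h ih ⊢
        have h1 : i0 + X ≤ iN := by omega
        have h2 := ih h1
        have h3 := hstep _ h2 (by omega)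
        rwa [Nat.add_assoc] at h3
    refine ⟨∅, M, i0, (iN - i0) / ρ + 1, (Set.empty_union M).symm, by simp,
      Set.finite_empty, by simp, by simp, ?_, ?_⟩
    · -- M is exactly the arithmetic progression
      ext x
      constructor
      · intro hx
        have hx0 : i0 ≤ x := hi0_le x hx
        have hxN : x ≤ iN := hle_iN x hx
        obtain ⟨a, ha⟩ : ∃ a, a = (x - i0) / ρ := ⟨_, rfl⟩
        have h1 : a * ρ ≤ x - i0 := by
          rw [ha]; exact Nat.div_mul_le_self _ _
        have hdm1 := Nat.div_add_mod (x - i0) ρ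
        have hdm2 : (x - i0) % ρ < ρ := Nat.mod_lt _ hρ0
        rw [← ha] at hdm1
        have e5 : ρ * a = a * ρ := by ring
        rw [e5] at hdm1
        have haK : a ≤ (iN - i0) / ρ := by
          rw [ha]; exact Nat.div_le_div_right (by omega)
        by_cases hxe : x = i0 + a * ρ
        · refine ⟨a, ?_, hxe.symm⟩
          simp only [Set.mem_Iio]
          generalize (iN - i0) / ρ = K at haK ⊢
          omega
        · exfalso
          have hmem : i0 + a * ρ ∈ M := hchain a (by
            generalize a * ρ = X at h1 ⊢
            omega)
          have hlt2 : i0 + a * ρ < x := by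
            generalize a * ρ = X at h1 hxe ⊢
            omega
          have hg2 := hgap _ hmem _ hx hlt2
          generalize a * ρ = X at h1 hdm1 hlt2 hg2
          generalize (x - i0) % ρ = Y at hdm1 hdm2
          omega
      · rintro ⟨a, haI, rfl⟩
        simp only [Set.mem_Iio] at haI
        apply hchain
        have h1 : a ≤ (iN - i0) / ρ := Nat.lt_succ_iff.mp haI
        have h2 := (Nat.le_div_iff_mul_le hρ0).mp h1
        generalize a * ρ = X at h2 ⊢
        omega
    · -- the predVal condition holds on all of M
      intro i hi i' hi' d hd
      have key : ∀ x ∈ M, predVal T (x + m - ρ + d) = predVal P (m - ρ + d) := by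
        intro x hx
        rw [hMmem] at hx
        have hq : 0 < predVal P (m - ρ + d) := by
          by_contra h0
          have h0' : predVal P (m - ρ + d) = 0 := by omega
          have hlt3 := firstocc_lt hρ0 hπ (show m - ρ + d < m by omega) h0'
          generalize Fintype.card σ * ρ = X at hlt3 hA2
          omega
        have h := predVal_match hx.2.2 (show m - ρ + d < m by omega) hq
        rwa [show x + (m - ρ + d) = x + m - ρ + d from by omega] at h
      rw [key i hi, key i' hi']
  · -- few matches: take A to be the singleton of the maximal match (or both empty)
    rcases Set.eq_empty_or_nonempty M with hemp | hne
    · refine ⟨∅, ∅, 0, 0, by rw [hemp]; simp, by simp, Set.finite_empty, by simp,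
        by simp, ?_, by simp⟩
      rw [show Set.Iio (0 : ℕ) = (∅ : Set ℕ) from by ext u; simp]
      simp
    · have hFne : hMfin.toFinset.Nonempty := by
        rw [Set.Finite.toFinset_nonempty]
        exact hne
      set iN := hMfin.toFinset.max' hFne with hiN
      have hiNM : iN ∈ M := by
        rw [hiN]
        exact (Set.Finite.mem_toFinset hMfin).mp (Finset.max'_mem _ _)
      refine ⟨M \ {iN}, {iN}, iN, 1, ?_, ?_, hMfin.diff, ?_, ?_, ?_, ?_⟩
      · exact (Set.diff_union_of_subset (by simpa using hiNM)).symm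
      · exact Set.disjoint_singleton_right.mpr (by simp)
      · have h1 : (M \ {iN}).ncard = M.ncard - 1 :=
          Set.ncard_diff_singleton_of_mem hiNM
        have h2 : 0 < M.ncard := (Set.ncard_pos hMfin).mpr hne
        omega
      · intro y hy x hx
        rw [Set.mem_singleton_iff] at hx
        subst hx
        have hyM : y ∈ M := hy.1
        have hyne : y ≠ iN := by simpa using hy.2
        have : y ≤ iN := by
          rw [hiN]
          exact Finset.le_max' _ y ((Set.Finite.mem_toFinset hMfin).mpr hyM)
        omega
      · have h0 : Set.Iio (1 : ℕ) = {0} := by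
          ext k; simp [Nat.lt_one_iff]
        rw [h0, Set.image_singleton]
        simp
      · intro i hi i' hi' d hd
        rw [Set.mem_singleton_iff] at hi hi'
        rw [hi, hi']
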